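/- Let M be an n×m real matrix with n ≥ m and MᵀM ≺ I. Then there exist X_M, Y_M ∈ ℝ^{m×m} with X_M invertible and Z_M ∈ ℝ^{(n−m)×m} such that, with N = X_MᵀX_M + Y_M − Y_Mᵀ + Z_MᵀZ_M, one has I + N invertible, the top m×m block of M equals (I − N)(I + N)⁻¹, and the bottom (n−m)×m block equals −2Z_M(I + N)⁻¹. -/

import Mathlib

open Matrix

private lemma unit_one_add {m : ℕ} (A : Matrix (Fin m) (Fin m) ℝ)
    (h : (1 - Aᵀ * A).PosDef) : IsUnit (1 + A) := by
  rw [Matrix.isUnit_iff_isUnit_det, isUnit_iff_ne_zero]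
  intro hdet
  obtain ⟨v, hv, hAv⟩ := (Matrix.exists_mulVec_eq_zero_iff).2 hdet
  rw [add_mulVec, one_mulVec] at hAv
  have hAv' : A *ᵥ v = -v := eq_neg_of_add_eq_zero_right hAv
  have hpos := h.dotProduct_mulVec_pos hv
  rw [sub_mulVec, one_mulVec, ← mulVec_mulVec, hAv', mulVec_neg, star_trivial,
    sub_neg_eq_add, dotProduct_add, Matrix.dotProduct_mulVec, vecMul_transpose, hAv',
    neg_dotProduct] at hpos
  simp at hpos

private lemma posdef_conj {m : ℕ} {A B : Matrix (Fin m) (Fin m) ℝ}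
    (hA : A.PosDef) (hB : IsUnit B) : (Bᵀ * A * B).PosDef := by
  refine Matrix.PosDef.of_dotProduct_mulVec_pos ?_ ?_
  · have h1 := hA.1
    rw [Matrix.IsHermitian, conjTranspose_eq_transpose_of_trivial] at h1 ⊢
    rw [transpose_mul, transpose_mul, transpose_transpose, h1, Matrix.mul_assoc]
  · intro x hx
    have hBx : B *ᵥ x ≠ 0 := by
      intro hc
      exact hx ((Matrix.mulVec_injective_iff_isUnit.2 hB)
        (hc.trans (Matrix.mulVec_zero B).symm))
    have h2 := hA.dotProduct_mulVec_pos hBx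
    rw [star_trivial] at h2
    rw [star_trivial, ← Matrix.mulVec_mulVec, ← Matrix.mulVec_mulVec,
      Matrix.dotProduct_mulVec, vecMul_transpose]
    exact h2

theorem stmt9 {m p : ℕ}
    (M : Matrix (Fin m ⊕ Fin p) (Fin m) ℝ) (hM : (1 - Mᵀ * M).PosDef) :
    ∃ (XM YM : Matrix (Fin m) (Fin m) ℝ) (ZM : Matrix (Fin p) (Fin m) ℝ),
      IsUnit XM ∧
      ∀ N : Matrix (Fin m) (Fin m) ℝ, N = XMᵀ * XM + YM - YMᵀ + ZMᵀ * ZM →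
        IsUnit (1 + N) ∧
        M = Matrix.fromRows ((1 - N) * (1 + N)⁻¹) (-(2 : ℝ) • (ZM * (1 + N)⁻¹)) := by
  set M1 := M.toRows₁ with hM1def
  set M2 := M.toRows₂ with hM2def
  have hMdecomp : Mᵀ * M = M1ᵀ * M1 + M2ᵀ * M2 := by
    conv_lhs => rw [← fromRows_toRows M]
    rw [transpose_fromRows, fromCols_mul_fromRows]
  have h1 : (1 - M1ᵀ * M1).PosDef := by
    have heq : (1 : Matrix (Fin m) (Fin m) ℝ) - M1ᵀ * M1
        = (1 - Mᵀ * M) + M2ᵀ * M2 := by rw [hMdecomp]; abel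
    rw [heq]
    refine hM.add_posSemidef ?_
    simpa [conjTranspose_eq_transpose_of_trivial] using
      Matrix.posSemidef_conjTranspose_mul_self M2
  set B := 1 + M1 with hBdef
  have hUB : IsUnit B := unit_one_add M1 h1
  have hUBd : IsUnit B.det := (Matrix.isUnit_iff_isUnit_det B).1 hUB
  have hBB : B * B⁻¹ = 1 := Matrix.mul_nonsing_inv B hUBd
  have hBB' : B⁻¹ * B = 1 := Matrix.nonsing_inv_mul B hUBd
  have hBti : Bᵀ⁻¹ = B⁻¹ᵀ := (Matrix.transpose_nonsing_inv B).symm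
  have hBt : Bᵀ * Bᵀ⁻¹ = 1 := by rw [hBti, ← transpose_mul, hBB', transpose_one]
  have hBt' : Bᵀ⁻¹ * Bᵀ = 1 := by rw [hBti, ← transpose_mul, hBB, transpose_one]
  have hUBinv : IsUnit B⁻¹ := by
    rw [Matrix.isUnit_iff_isUnit_det]
    exact Matrix.isUnit_det_of_right_inverse hBB'
  set N0 := (1 - M1) * B⁻¹ with hN0def
  set P := Bᵀ⁻¹ * (1 - Mᵀ * M) * B⁻¹ with hPdef
  have hP : P.PosDef := by
    have := posdef_conj hM hUBinv
    rwa [hPdef, hBti]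
  set XM := (open scoped MatrixOrder in CFC.sqrt P) with hXMdef
  have hXMsym : XMᵀ = XM := by
    have h := (open scoped MatrixOrder in (CFC.sqrt_nonneg P).posSemidef.1)
    rwa [Matrix.IsHermitian, conjTranspose_eq_transpose_of_trivial] at h
  have hXMsq : XM * XM = P :=
    (open scoped MatrixOrder in CFC.sqrt_mul_sqrt_self P hP.posSemidef.nonneg)
  have hXMunit : IsUnit XM := by
    rw [Matrix.isUnit_iff_isUnit_det, isUnit_iff_ne_zero]
    intro hc
    have : P.det = 0 := by rw [← hXMsq, Matrix.det_mul, hc, mul_zero]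
    exact hP.det_pos.ne' this
  set YM := (4⁻¹ : ℝ) • (N0 - N0ᵀ) with hYMdef
  set ZM := -(M2 * B⁻¹) with hZMdef
  refine ⟨XM, YM, ZM, hXMunit, ?_⟩
  intro N hN
  -- key: N = N0
  have cancel : ∀ X Y : Matrix (Fin m) (Fin m) ℝ, Bᵀ * X * B = Bᵀ * Y * B → X = Y := by
    intro X Y h
    have h2 : Bᵀ⁻¹ * (Bᵀ * X * B) * B⁻¹ = Bᵀ⁻¹ * (Bᵀ * Y * B) * B⁻¹ := by rw [h]
    simp only [← Matrix.mul_assoc, hBt', one_mul] at h2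
    simp only [Matrix.mul_assoc, hBB, mul_one] at h2
    exact h2
  have hN0t : N0ᵀ = Bᵀ⁻¹ * (1 - M1ᵀ) := by
    rw [hN0def, transpose_mul, hBti, transpose_sub, transpose_one]
  have e1 : Bᵀ * P * B = 1 - Mᵀ * M := by
    rw [hPdef]
    simp only [← Matrix.mul_assoc]
    rw [hBt, one_mul, Matrix.mul_assoc, hBB', mul_one]
  have e2 : Bᵀ * (ZMᵀ * ZM) * B = M2ᵀ * M2 := by
    rw [hZMdef, transpose_neg, transpose_mul]
    simp only [Matrix.neg_mul, Matrix.mul_neg, neg_neg]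
    calc Bᵀ * (B⁻¹ᵀ * M2ᵀ * (M2 * B⁻¹)) * B
        = (Bᵀ * B⁻¹ᵀ) * (M2ᵀ * M2) * (B⁻¹ * B) := by
          simp only [Matrix.mul_assoc]
      _ = M2ᵀ * M2 := by rw [← hBti, hBt, hBB', one_mul, mul_one]
  have e3 : Bᵀ * N0 * B = Bᵀ * (1 - M1) := by
    rw [hN0def, Matrix.mul_assoc, Matrix.mul_assoc, hBB', mul_one]
  have e4 : Bᵀ * N0ᵀ * B = (1 - M1ᵀ) * B := by
    rw [hN0t, ← Matrix.mul_assoc, hBt, one_mul]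
  have hNN0 : N = N0 := by
    have hYMt : YMᵀ = (4⁻¹ : ℝ) • (N0ᵀ - N0) := by
      rw [hYMdef, transpose_smul, transpose_sub, transpose_transpose]
    have step : N = P + (2⁻¹ : ℝ) • (N0 - N0ᵀ) + ZMᵀ * ZM := by
      rw [hN, hXMsym, hXMsq, hYMt, hYMdef]
      module
    rw [step]
    apply cancel
    simp only [Matrix.mul_add, Matrix.add_mul, Matrix.mul_sub, Matrix.sub_mul,
      mul_smul_comm, smul_mul_assoc]
    rw [e1, e2, e3, e4, hMdecomp]
    have key2 : Bᵀ * (1 - M1) - (1 - M1ᵀ) * B = (2 : ℝ) • (M1ᵀ - M1) := by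
      rw [hBdef, transpose_add, transpose_one, two_smul ℝ (M1ᵀ - M1)]
      noncomm_ring
    rw [key2, smul_smul]
    norm_num
    rw [hBdef, transpose_add, transpose_one]
    noncomm_ring
  have h1N : 1 + N0 = (2 : ℝ) • B⁻¹ := by
    have h : (1 : Matrix (Fin m) (Fin m) ℝ) + N0 = (B + (1 - M1)) * B⁻¹ := by
      rw [Matrix.add_mul, ← hN0def, hBB]
    rw [h]
    have hc : B + (1 - M1) = (2 : ℝ) • (1 : Matrix (Fin m) (Fin m) ℝ) := by
      rw [hBdef, two_smul ℝ (1 : Matrix (Fin m) (Fin m) ℝ)]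
      noncomm_ring
    rw [hc, Matrix.smul_mul, one_mul]
  have hprod : ((2 : ℝ) • B⁻¹) * ((2⁻¹ : ℝ) • B) = 1 := by
    rw [Matrix.smul_mul, Matrix.mul_smul, smul_smul, hBB']
    norm_num
  have hinv : (1 + N0)⁻¹ = (2⁻¹ : ℝ) • B := by
    apply Matrix.inv_eq_right_inv
    rw [h1N]; exact hprod
  have hUnit : IsUnit (1 + N0) := by
    rw [Matrix.isUnit_iff_isUnit_det]
    exact Matrix.isUnit_det_of_right_inverse (by rw [h1N]; exact hprod)
  refine ⟨by rwa [hNN0], ?_⟩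
  have h1mN : (1 : Matrix (Fin m) (Fin m) ℝ) - N0 = (2 : ℝ) • (M1 * B⁻¹) := by
    have h : (1 : Matrix (Fin m) (Fin m) ℝ) - N0 = (B - (1 - M1)) * B⁻¹ := by
      rw [Matrix.sub_mul, ← hN0def, hBB]
    rw [h]
    have hc : B - (1 - M1) = (2 : ℝ) • M1 := by
      rw [hBdef, two_smul ℝ M1]
      noncomm_ring
    rw [hc, Matrix.smul_mul]
  have htop : (1 - N0) * ((2⁻¹ : ℝ) • B) = M1 := by
    rw [h1mN, smul_mul_assoc, mul_smul_comm, smul_smul, Matrix.mul_assoc, hBB', mul_one]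
    norm_num
  have hbot : (-(2 : ℝ)) • (ZM * ((2⁻¹ : ℝ) • B)) = M2 := by
    rw [hZMdef, Matrix.mul_smul, Matrix.neg_mul, Matrix.mul_assoc, hBB', Matrix.mul_one]
    module
  rw [hNN0, hinv, htop, hbot, fromRows_toRows]
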